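/- arXiv:2605.24804 — 2 statements merged into one kernel-verified Lean document; each statement's English description precedes it below -/
import Mathlib

section
/- Let N ≥ 1, a > -N, and R ≥ 0. Then for every u ∈ C_c^1(ℝ^N), ∫_{|x|≥R} |u(x)|² |x|^a dx ≤ (4/(a+N)²) ∫_{|x|≥R} |x·∇u(x)|² |x|^a dx. -/
open MeasureTheory Real Set Filter Topology Metric
open scoped RealInnerProductSpace ENNReal

private lemma integrableOn_aux {b : ℝ} (hb : -1 < b) {h : ℝ → ℝ} (hc : Continuous h)
    (hs : HasCompactSupport h) {R : ℝ} (hR : 0 ≤ R) :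
    IntegrableOn (fun r => h r * r ^ b) (Ioi R) := by
  obtain ⟨M0, hM0⟩ := hs.isCompact.isBounded.subset_closedBall 0
  set M := max M0 R with hM
  have hMR : R ≤ M := le_max_right _ _
  have hsub : Ioi R = Ioc R M ∪ Ioi M := (Ioc_union_Ioi_eq_Ioi hMR).symm
  rw [hsub]
  apply IntegrableOn.union
  · -- dominated by C * r ^ b on Ioc R M ⊆ Ioc 0 M
    obtain ⟨C, hC⟩ := hc.bounded_above_of_compact_support hs
    have hrpow : IntegrableOn (fun r : ℝ => r ^ b) (Ioc 0 M) := by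
      have := (intervalIntegral.intervalIntegrable_rpow' (a := 0) (b := M) hb).1
      simpa [uIoc_of_le (le_trans hR hMR)] using this
    have hrpow' : IntegrableOn (fun r : ℝ => C * r ^ b) (Ioc R M) :=
      ((hrpow.mono_set (Ioc_subset_Ioc_left hR)).const_mul C)
    refine Integrable.mono' hrpow' ?_ ?_
    · exact (hc.aestronglyMeasurable.mul
        ((measurable_id.pow_const b).aestronglyMeasurable)).restrict
    · filter_upwards [ae_restrict_mem measurableSet_Ioc] with r hr
      have hr0 : 0 < r := lt_of_le_of_lt hR hr.1
      rw [norm_mul, Real.norm_rpow_of_nonneg hr0.le, Real.norm_of_nonneg hr0.le]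
      exact mul_le_mul_of_nonneg_right (hC r) (Real.rpow_nonneg hr0.le b)
  · -- zero on Ioi M
    apply (integrableOn_congr_fun (g := fun _ => (0:ℝ)) ?_ measurableSet_Ioi).mpr
    · exact integrableOn_zero
    · intro r hr
      have : h r = 0 := by
        by_contra hne
        have := hM0 (subset_closure (Function.mem_support.mpr hne))
        rw [Metric.mem_closedBall, Real.dist_eq, sub_zero] at this
        have : r ≤ M0 := le_trans (le_abs_self r) this
        exact absurd (lt_of_le_of_lt (le_max_left M0 R) hr) (not_lt.mpr this)
      simp [this]

private lemma hardy1D {p : ℝ} (hp : 0 < p) {R : ℝ} (hR : 0 ≤ R) {g : ℝ → ℝ}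
    (hg : ContDiff ℝ 1 g) (hs : HasCompactSupport g) :
    ∫ r in Ioi R, g r ^ 2 * r ^ (p - 1)
      ≤ (4 / p ^ 2) * ∫ r in Ioi R, deriv g r ^ 2 * r ^ (p + 1) := by
  have hgc : Continuous g := hg.continuous
  have hg'c : Continuous (deriv g) := hg.continuous_deriv le_rfl
  have hs' : HasCompactSupport (deriv g) := hs.deriv
  have hsq : HasCompactSupport (fun r => g r ^ 2) := hs.comp_left (g := fun t : ℝ => t ^ 2) (by simp)
  have hsq' : HasCompactSupport (fun r => deriv g r ^ 2) :=
    hs'.comp_left (g := fun t : ℝ => t ^ 2) (by simp)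
  have hmul : HasCompactSupport (fun r => g r * deriv g r) := hs.mul_right
  have IA : IntegrableOn (fun r => g r ^ 2 * r ^ (p - 1)) (Ioi R) :=
    integrableOn_aux (by linarith) (hgc.pow 2) hsq hR
  have IB : IntegrableOn (fun r => deriv g r ^ 2 * r ^ (p + 1)) (Ioi R) :=
    integrableOn_aux (by linarith) (hg'c.pow 2) hsq' hR
  have IC : IntegrableOn (fun r => (g r * deriv g r) * r ^ p) (Ioi R) :=
    integrableOn_aux (by linarith) (hgc.mul hg'c) hmul hR
  -- integration by parts on (R, ∞)
  set f : ℝ → ℝ := fun r => g r ^ 2 * r ^ p / p with hf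
  have hderiv : ∀ r ∈ Ioi R, HasDerivAt f
      (2 * (g r * deriv g r) * r ^ p / p + g r ^ 2 * r ^ (p - 1)) r := by
    intro r hr
    have hr0 : 0 < r := lt_of_le_of_lt hR hr
    have h1 : HasDerivAt g (deriv g r) r := (hg.differentiable one_ne_zero r).hasDerivAt
    have h2 : HasDerivAt (fun r : ℝ => r ^ p) (p * r ^ (p - 1)) r :=
      Real.hasDerivAt_rpow_const (Or.inl hr0.ne')
    have h3 : HasDerivAt (fun r => g r ^ 2) (2 * g r * deriv g r) r := by
      simpa [mul_comm, pow_two] using (h1.fun_pow 2)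
    have := ((h3.fun_mul h2).div_const p)
    refine this.congr_deriv ?_
    field_simp
  have hcont : ContinuousWithinAt f (Ici R) R := by
    apply ContinuousWithinAt.div_const
    apply ContinuousWithinAt.mul (Continuous.continuousWithinAt (by fun_prop))
    exact (Real.continuousAt_rpow_const R p (Or.inr hp.le)).continuousWithinAt
  have htend : Tendsto f atTop (𝓝 0) := by
    obtain ⟨M0, hM0⟩ := hs.isCompact.isBounded.subset_closedBall 0
    apply Tendsto.congr' _ tendsto_const_nhds
    filter_upwards [eventually_gt_atTop M0] with r hr
    have : g r = 0 := by
      by_contra hne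
      have := hM0 (subset_closure (Function.mem_support.mpr hne))
      rw [Metric.mem_closedBall, Real.dist_eq, sub_zero] at this
      exact absurd hr (not_lt.mpr (le_trans (le_abs_self r) this))
    simp [hf, this]
  have Iint : IntegrableOn
      (fun r => 2 * (g r * deriv g r) * r ^ p / p + g r ^ 2 * r ^ (p - 1)) (Ioi R) := by
    apply Integrable.add _ IA
    have := (IC.const_mul 2).div_const p
    simpa [mul_assoc, mul_div_assoc] using this
  have hibp := integral_Ioi_of_hasDerivAt_of_tendsto hcont hderiv Iint htend
  have hsplit : ∫ r in Ioi R, (2 * (g r * deriv g r) * r ^ p / p + g r ^ 2 * r ^ (p - 1))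
      = (2 / p) * (∫ r in Ioi R, (g r * deriv g r) * r ^ p)
        + ∫ r in Ioi R, g r ^ 2 * r ^ (p - 1) := by
    rw [integral_add _ IA, ← integral_const_mul (2/p) (fun r => (g r * deriv g r) * r ^ p)]
    · congr 1
      apply setIntegral_congr_fun measurableSet_Ioi
      intro r _
      ring
    · have := (IC.const_mul 2).div_const p
      simpa [mul_assoc, mul_div_assoc] using this
  have hfR : 0 ≤ f R := by
    have : (0:ℝ) ≤ R ^ p := Real.rpow_nonneg hR p
    positivity
  set A := ∫ r in Ioi R, g r ^ 2 * r ^ (p - 1) with hA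
  set B := ∫ r in Ioi R, deriv g r ^ 2 * r ^ (p + 1) with hB
  set D := ∫ r in Ioi R, (g r * deriv g r) * r ^ p with hD
  have hAD : (2 / p) * D + A = 0 - f R := by rw [← hsplit, hibp]
  have hA1 : A ≤ -((2 / p) * D) := by linarith
  have hptwise : ∀ᵐ r ∂(volume.restrict (Ioi R)),
      -((g r * deriv g r) * r ^ p)
        ≤ p / 4 * (g r ^ 2 * r ^ (p - 1)) + 1 / p * (deriv g r ^ 2 * r ^ (p + 1)) := by
    filter_upwards [ae_restrict_mem measurableSet_Ioi] with r hr
    have hr0 : 0 < r := lt_of_le_of_lt hR hr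
    have e1 : r ^ p = r ^ (p - 1) * r := by
      rw [← Real.rpow_add_one hr0.ne' (p - 1)]; ring_nf
    have e2 : r ^ (p + 1) = r ^ (p - 1) * r ^ 2 := by
      rw [← Real.rpow_natCast r 2, ← Real.rpow_add hr0]; ring_nf
    have hrp : (0:ℝ) ≤ r ^ (p - 1) := Real.rpow_nonneg hr0.le _
    rw [e1, e2]
    have key : -(g r * deriv g r * r)
        ≤ p / 4 * g r ^ 2 + 1 / p * (deriv g r ^ 2 * r ^ 2) := by
      rw [← sub_nonneg]
      have heq : p / 4 * g r ^ 2 + 1 / p * (deriv g r ^ 2 * r ^ 2) - (-(g r * deriv g r * r))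
          = (p / 2 * g r + deriv g r * r) ^ 2 / p := by
        field_simp
        ring
      rw [heq]
      positivity
    calc -(g r * deriv g r * (r ^ (p - 1) * r)) = (-(g r * deriv g r * r)) * r ^ (p - 1) := by ring
      _ ≤ (p / 4 * g r ^ 2 + 1 / p * (deriv g r ^ 2 * r ^ 2)) * r ^ (p - 1) :=
          mul_le_mul_of_nonneg_right key hrp
      _ = p / 4 * (g r ^ 2 * r ^ (p - 1)) + 1 / p * (deriv g r ^ 2 * (r ^ (p - 1) * r ^ 2)) := by
          ring
    
  have hInt2 : IntegrableOn
      (fun r => p / 4 * (g r ^ 2 * r ^ (p - 1)) + 1 / p * (deriv g r ^ 2 * r ^ (p + 1)))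
      (Ioi R) := (IA.const_mul _).add (IB.const_mul _)
  have hmono : ∫ r in Ioi R, -((g r * deriv g r) * r ^ p)
      ≤ ∫ r in Ioi R, (p / 4 * (g r ^ 2 * r ^ (p - 1)) + 1 / p * (deriv g r ^ 2 * r ^ (p + 1))) :=
    integral_mono_ae IC.neg hInt2 hptwise
  rw [integral_neg, integral_add (IA.const_mul _) (IB.const_mul _), integral_const_mul (p/4),
    integral_const_mul (1/p)] at hmono
  have hfin : A ≤ (2 / p) * (p / 4 * A + 1 / p * B) := by
    refine hA1.trans ?_
    have h2pnn : (0:ℝ) ≤ 2 / p := by positivity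
    calc -(2 / p * D) = (2 / p) * (-D) := by ring
      _ ≤ (2 / p) * (p / 4 * A + 1 / p * B) := mul_le_mul_of_nonneg_left hmono h2pnn
  have hBnn : 0 ≤ B := by
    apply setIntegral_nonneg measurableSet_Ioi
    intro r hr
    have hr0 : 0 < r := lt_of_le_of_lt hR hr
    positivity
  have h2p : (2 / p) * (p / 4 * A + 1 / p * B) = A / 2 + 2 / p ^ 2 * B := by
    field_simp; ring
  rw [h2p] at hfin
  have h4 : A ≤ 2 * (2 / p ^ 2 * B) := by linarith
  have h5 : 2 * (2 / p ^ 2 * B) = 4 / p ^ 2 * B := by ring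
  linarith

private lemma lintegral_polar {E : Type*} [NormedAddCommGroup E] [NormedSpace ℝ E]
    [MeasurableSpace E] [BorelSpace E] [FiniteDimensional ℝ E] [Nontrivial E]
    (μ : Measure E) [μ.IsAddHaarMeasure] (f : E → ℝ≥0∞) (hf : Measurable f) :
    ∫⁻ x, f x ∂μ = ∫⁻ ω : sphere (0:E) 1, ∫⁻ r in Ioi (0:ℝ),
      ENNReal.ofReal (r ^ (Module.finrank ℝ E - 1)) * f (r • (ω : E)) ∂volume ∂μ.toSphere := by
  have h0 : μ {(0:E)} = 0 := measure_singleton 0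
  have step1 : ∫⁻ x, f x ∂μ = ∫⁻ x in ({0}ᶜ : Set E), f x ∂μ := by
    rw [← lintegral_add_compl f (measurableSet_singleton (0:E))]
    rw [setLIntegral_measure_zero _ _ h0, zero_add]
  rw [step1, ← lintegral_subtype_comap (measurableSet_singleton (0:E)).compl]
  set T := homeomorphUnitSphereProd E
  have mp := μ.measurePreserving_homeomorphUnitSphereProd
  set g : sphere (0:E) 1 × Ioi (0:ℝ) → ℝ≥0∞ := fun p => f (p.2.1 • (p.1 : E)) with hg
  have hgm : Measurable g := by
    apply hf.comp
    exact (continuous_subtype_val.comp continuous_snd).smul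
      (continuous_subtype_val.comp continuous_fst) |>.measurable
  have hcomp : ∀ x : ({0}ᶜ : Set E), f x = g (T x) := by
    intro x
    simp only [hg, homeomorphUnitSphereProd_apply_snd_coe, homeomorphUnitSphereProd_apply_fst_coe, T]
    rw [smul_smul, mul_inv_cancel₀ (norm_ne_zero_iff.2 x.2), one_smul]
  calc ∫⁻ x : ({0}ᶜ : Set E), f x ∂(μ.comap (↑))
      = ∫⁻ x : ({0}ᶜ : Set E), g (T x) ∂(μ.comap (↑)) := by
        exact lintegral_congr hcomp
    _ = ∫⁻ p, g p ∂(μ.toSphere.prod (.volumeIoiPow (Module.finrank ℝ E - 1))) :=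
        mp.lintegral_comp hgm
    _ = ∫⁻ ω : sphere (0:E) 1, ∫⁻ r : Ioi (0:ℝ), g (ω, r)
          ∂(Measure.volumeIoiPow (Module.finrank ℝ E - 1)) ∂μ.toSphere :=
        lintegral_prod _ hgm.aemeasurable
    _ = ∫⁻ ω : sphere (0:E) 1, ∫⁻ r in Ioi (0:ℝ),
          ENNReal.ofReal (r ^ (Module.finrank ℝ E - 1)) * f (r • (ω : E)) ∂volume ∂μ.toSphere := by
        apply lintegral_congr
        intro ω
        rw [Measure.volumeIoiPow, lintegral_withDensity_eq_lintegral_mul]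
        · calc ∫⁻ (a : Ioi (0:ℝ)), ((fun r : Ioi (0:ℝ) => ENNReal.ofReal (r.1 ^ (Module.finrank ℝ E - 1)))
                * fun r => g (ω, r)) a ∂(Measure.comap Subtype.val volume)
              = ∫⁻ (a : Ioi (0:ℝ)), (fun r : ℝ => ENNReal.ofReal (r ^ (Module.finrank ℝ E - 1))
                  * f (r • (ω : E))) a.1 ∂(Measure.comap Subtype.val volume) :=
                lintegral_congr fun r => rfl
            _ = _ := lintegral_subtype_comap (μ := (volume : Measure ℝ)) measurableSet_Ioi
                (fun r : ℝ => ENNReal.ofReal (r ^ (Module.finrank ℝ E - 1)) * f (r • (ω : E)))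
        · exact (measurable_subtype_coe.pow_const _).ennreal_ofReal
        · show Measurable fun r : Ioi (0:ℝ) => f ((r : ℝ) • (ω : E))
          exact hf.comp (measurable_subtype_coe.smul_const _)

theorem hardy_inequality_annulus
    (N : ℕ) (hN : 1 ≤ N) (a : ℝ) (ha : -(N : ℝ) < a) (R : ℝ) (hR : 0 ≤ R)
    (u : EuclideanSpace ℝ (Fin N) → ℝ)
    (hu : ContDiff ℝ 1 u) (hsupp : HasCompactSupport u) :
    ∫ x in {x : EuclideanSpace ℝ (Fin N) | R ≤ ‖x‖}, u x ^ 2 * ‖x‖ ^ a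
      ≤ (4 / (a + N) ^ 2) *
        ∫ x in {x : EuclideanSpace ℝ (Fin N) | R ≤ ‖x‖},
          ⟪x, gradient u x⟫ ^ 2 * ‖x‖ ^ a := by
  haveI : Nonempty (Fin N) := ⟨⟨0, hN⟩⟩
  haveI : Nontrivial (EuclideanSpace ℝ (Fin N)) := by
    refine Module.nontrivial_of_finrank_pos (R := ℝ) ?_
    rw [finrank_euclideanSpace_fin]
    omega
  set p : ℝ := a + N with hpdef
  have hp : 0 < p := by simp only [hpdef]; linarith
  have hfr : Module.finrank ℝ (EuclideanSpace ℝ (Fin N)) = N := finrank_euclideanSpace_fin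
  set S : Set (EuclideanSpace ℝ (Fin N)) := {x | R ≤ ‖x‖} with hS
  have hSmeas : MeasurableSet S := (isClosed_le continuous_const continuous_norm).measurableSet
  have hucont : Continuous u := hu.continuous
  have hgradc : Continuous (gradient u) := by
    have h1 : Continuous (fderiv ℝ u) := hu.continuous_fderiv one_ne_zero
    exact ((InnerProductSpace.toDual ℝ (EuclideanSpace ℝ (Fin N))).symm.continuous.comp h1 : _)
  have hrpow_meas : Measurable fun x : EuclideanSpace ℝ (Fin N) => ‖x‖ ^ a :=
    (measurable_id.pow_const a).comp measurable_norm
  have hf1m : Measurable fun x : EuclideanSpace ℝ (Fin N) => ENNReal.ofReal (u x ^ 2 * ‖x‖ ^ a) :=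
    (((hucont.pow 2).measurable).mul hrpow_meas).ennreal_ofReal
  have hinnerc : Continuous fun x : EuclideanSpace ℝ (Fin N) => ⟪x, gradient u x⟫ :=
    continuous_id.inner hgradc
  have hf2m : Measurable fun x : EuclideanSpace ℝ (Fin N) =>
      ENNReal.ofReal (⟪x, gradient u x⟫ ^ 2 * ‖x‖ ^ a) :=
    (((hinnerc.pow 2).measurable).mul hrpow_meas).ennreal_ofReal
  -- derivative along rays
  have hgderiv : ∀ (w : EuclideanSpace ℝ (Fin N)) (r : ℝ),
      HasDerivAt (fun t : ℝ => u (t • w)) ⟪gradient u (r • w), w⟫ r := by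
    intro w r
    have h1 : HasDerivAt (fun t : ℝ => t • w) w r := by
      simpa using (hasDerivAt_id r).smul_const w
    have h2 : HasFDerivAt u (fderiv ℝ u (r • w)) (r • w) :=
      (hu.differentiable one_ne_zero _).hasFDerivAt
    have h3 := h2.comp_hasDerivAt r h1
    have h4 : ⟪gradient u (r • w), w⟫ = fderiv ℝ u (r • w) w := by
      simp only [gradient]
      exact InnerProductSpace.toDual_symm_apply
    rw [h4]
    exact h3
  -- polar formula for the restricted set
  have polar_restrict : ∀ f : EuclideanSpace ℝ (Fin N) → ℝ≥0∞, Measurable f →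
      ∫⁻ x in S, f x = ∫⁻ ω : sphere (0 : EuclideanSpace ℝ (Fin N)) 1, ∫⁻ r in Ioi R,
        ENNReal.ofReal (r ^ (N - 1)) * f (r • (ω : EuclideanSpace ℝ (Fin N)))
          ∂volume ∂(volume.toSphere) := by
    intro f hf
    rw [← lintegral_indicator hSmeas, lintegral_polar volume _ (hf.indicator hSmeas)]
    refine lintegral_congr fun ω => ?_
    have hω1 : ‖(ω : EuclideanSpace ℝ (Fin N))‖ = 1 := mem_sphere_zero_iff_norm.mp ω.2
    have step1 : ∫⁻ r in Ioi (0:ℝ),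
        ENNReal.ofReal (r ^ (Module.finrank ℝ (EuclideanSpace ℝ (Fin N)) - 1)) *
          S.indicator f (r • (ω : EuclideanSpace ℝ (Fin N))) ∂volume
        = ∫⁻ r in Ioi (0:ℝ), (Ici R).indicator
            (fun r => ENNReal.ofReal (r ^ (N - 1)) *
              f (r • (ω : EuclideanSpace ℝ (Fin N)))) r ∂volume := by
      refine setLIntegral_congr_fun measurableSet_Ioi ?_
      intro r hr; beta_reduce
      have hrnorm : ‖r • (ω : EuclideanSpace ℝ (Fin N))‖ = r := by
        rw [norm_smul, hω1, mul_one, Real.norm_eq_abs, abs_of_pos hr]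
      have hmem : (r • (ω : EuclideanSpace ℝ (Fin N))) ∈ S ↔ r ∈ Ici R := by
        simp only [hS, mem_setOf_eq, hrnorm, mem_Ici]
      rw [hfr]
      by_cases hmem2 : r ∈ Ici R
      · rw [indicator_of_mem hmem2, indicator_of_mem (hmem.mpr hmem2)]
      · rw [indicator_of_notMem hmem2, indicator_of_notMem (fun hc => hmem2 (hmem.mp hc)),
          mul_zero]
    rw [step1, lintegral_indicator measurableSet_Ici, Measure.restrict_restrict measurableSet_Ici]
    have hset : (Ici R ∩ Ioi (0:ℝ) : Set ℝ) =ᵐ[volume] (Ioi R : Set ℝ) := by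
      have h1 : (Ici R : Set ℝ) =ᵐ[volume] (Ioi R : Set ℝ) := Ioi_ae_eq_Ici.symm
      have h2 : (Ici R ∩ Ioi (0:ℝ) : Set ℝ) =ᵐ[volume] (Ioi R ∩ Ioi (0:ℝ) : Set ℝ) :=
        Filter.EventuallyEq.inter h1 (Filter.EventuallyEq.refl _ _)
      have h3 : (Ioi R ∩ Ioi (0:ℝ) : Set ℝ) = Ioi R :=
        inter_eq_left.mpr (fun r hr => lt_of_le_of_lt hR hr)
      rw [h3] at h2
      exact h2
    rw [Measure.restrict_congr_set hset]
  -- directional functions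
  set G : sphere (0 : EuclideanSpace ℝ (Fin N)) 1 → ℝ → ℝ :=
    fun ω t => u (t • (ω : EuclideanSpace ℝ (Fin N))) with hG
  have hGC : ∀ ω, ContDiff ℝ 1 (G ω) := fun ω =>
    hu.comp (contDiff_id.smul contDiff_const)
  obtain ⟨M0, hM0⟩ := hsupp.isCompact.isBounded.subset_closedBall 0
  set M : ℝ := max M0 0 with hM
  have hMnn : 0 ≤ M := le_max_right _ _
  have hMsupp : tsupport u ⊆ closedBall (0 : EuclideanSpace ℝ (Fin N)) M :=
    hM0.trans (closedBall_subset_closedBall (le_max_left _ _))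
  have husupp : ∀ x : EuclideanSpace ℝ (Fin N), M < ‖x‖ → u x = 0 := by
    intro x hx
    by_contra hne
    have := hMsupp (subset_closure (Function.mem_support.mpr hne))
    rw [mem_closedBall, dist_zero_right] at this
    exact absurd hx (not_lt.mpr this)
  have hgradsupp : ∀ x : EuclideanSpace ℝ (Fin N), M < ‖x‖ → gradient u x = 0 := by
    intro x hx
    have hxnot : x ∉ tsupport u := by
      intro hc
      have := hMsupp hc
      rw [mem_closedBall, dist_zero_right] at this
      exact absurd hx (not_lt.mpr this)
    have : fderiv ℝ u x = 0 := by
      by_contra hne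
      exact hxnot (support_fderiv_subset ℝ (Function.mem_support.mpr hne))
    simp only [gradient, this, map_zero]
  have hGS : ∀ ω, HasCompactSupport (G ω) := by
    intro ω
    have hω1 : ‖(ω : EuclideanSpace ℝ (Fin N))‖ = 1 := mem_sphere_zero_iff_norm.mp ω.2
    have hsub : tsupport (G ω) ⊆ Icc (-M) M := by
      apply closure_minimal _ isClosed_Icc
      intro t ht
      have : u (t • (ω : EuclideanSpace ℝ (Fin N))) ≠ 0 := ht
      have hle : ‖t • (ω : EuclideanSpace ℝ (Fin N))‖ ≤ M := by
        by_contra hgt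
        exact this (husupp _ (not_le.mp hgt))
      rw [norm_smul, hω1, mul_one, Real.norm_eq_abs] at hle
      exact abs_le.mp hle |>.imp neg_le.mp id |> fun h => ⟨neg_le.mp (abs_le.mp hle).1 |> fun _ => (abs_le.mp hle).1, (abs_le.mp hle).2⟩
    exact IsCompact.of_isClosed_subset isCompact_Icc (isClosed_tsupport _) hsub
  have hGd : ∀ (ω : sphere (0 : EuclideanSpace ℝ (Fin N)) 1) (r : ℝ),
      deriv (G ω) r = ⟪gradient u (r • (ω : EuclideanSpace ℝ (Fin N))),
        (ω : EuclideanSpace ℝ (Fin N))⟫ :=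
    fun ω r => (hgderiv _ r).deriv
  have IA : ∀ ω, IntegrableOn (fun r => G ω r ^ 2 * r ^ (p - 1)) (Ioi R) := fun ω =>
    integrableOn_aux (by linarith) ((hGC ω).continuous.fun_pow 2)
      ((hGS ω).comp_left (g := fun t : ℝ => t ^ 2) (by simp)) hR
  have IB : ∀ ω, IntegrableOn (fun r => deriv (G ω) r ^ 2 * r ^ (p + 1)) (Ioi R) := fun ω =>
    integrableOn_aux (by linarith) (((hGC ω).continuous_deriv le_rfl).fun_pow 2)
      ((hGS ω).deriv.comp_left (g := fun t : ℝ => t ^ 2) (by simp)) hR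
  -- pointwise identities inside the radial integrals
  have hnpow : ∀ r : ℝ, 0 < r → (r : ℝ) ^ (N - 1 : ℕ) = r ^ ((N : ℝ) - 1) := by
    intro r hr
    rw [← Real.rpow_natCast r (N - 1)]
    congr 1
    rw [Nat.cast_sub hN, Nat.cast_one]
  have e₁ : ∀ ω : sphere (0 : EuclideanSpace ℝ (Fin N)) 1,
      (∫⁻ r in Ioi R, ENNReal.ofReal (r ^ (N - 1)) *
        ENNReal.ofReal (u (r • (ω : EuclideanSpace ℝ (Fin N))) ^ 2 *
          ‖r • (ω : EuclideanSpace ℝ (Fin N))‖ ^ a) ∂volume)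
        = ENNReal.ofReal (∫ r in Ioi R, G ω r ^ 2 * r ^ (p - 1)) := by
    intro ω
    have hω1 : ‖(ω : EuclideanSpace ℝ (Fin N))‖ = 1 := mem_sphere_zero_iff_norm.mp ω.2
    have step : (∫⁻ r in Ioi R, ENNReal.ofReal (r ^ (N - 1)) *
        ENNReal.ofReal (u (r • (ω : EuclideanSpace ℝ (Fin N))) ^ 2 *
          ‖r • (ω : EuclideanSpace ℝ (Fin N))‖ ^ a) ∂volume)
        = ∫⁻ r in Ioi R, ENNReal.ofReal (G ω r ^ 2 * r ^ (p - 1)) ∂volume := by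
      refine setLIntegral_congr_fun measurableSet_Ioi ?_
      intro r hr; beta_reduce
      have hr0 : 0 < r := lt_of_le_of_lt hR hr
      have hrnorm : ‖r • (ω : EuclideanSpace ℝ (Fin N))‖ = r := by
        rw [norm_smul, hω1, mul_one, Real.norm_eq_abs, abs_of_pos hr0]
      rw [hrnorm, ← ENNReal.ofReal_mul (by positivity)]
      congr 1
      rw [hnpow r hr0]
      have hexp : r ^ ((N : ℝ) - 1) * r ^ a = r ^ (p - 1) := by
        rw [← Real.rpow_add hr0]
        congr 1
        rw [hpdef]; ring
      calc r ^ ((N : ℝ) - 1) * (u (r • (ω : EuclideanSpace ℝ (Fin N))) ^ 2 * r ^ a)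
          = u (r • (ω : EuclideanSpace ℝ (Fin N))) ^ 2 * (r ^ ((N : ℝ) - 1) * r ^ a) := by ring
        _ = G ω r ^ 2 * r ^ (p - 1) := by rw [hexp]
    rw [step, ← ofReal_integral_eq_lintegral_ofReal (IA ω) ?_]
    filter_upwards [ae_restrict_mem measurableSet_Ioi] with r hr
    have hr0 : 0 < r := lt_of_le_of_lt hR hr
    positivity
  have e₂ : ∀ ω : sphere (0 : EuclideanSpace ℝ (Fin N)) 1,
      (∫⁻ r in Ioi R, ENNReal.ofReal (r ^ (N - 1)) *
        ENNReal.ofReal (⟪r • (ω : EuclideanSpace ℝ (Fin N)),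
            gradient u (r • (ω : EuclideanSpace ℝ (Fin N)))⟫ ^ 2 *
          ‖r • (ω : EuclideanSpace ℝ (Fin N))‖ ^ a) ∂volume)
        = ENNReal.ofReal (∫ r in Ioi R, deriv (G ω) r ^ 2 * r ^ (p + 1)) := by
    intro ω
    have hω1 : ‖(ω : EuclideanSpace ℝ (Fin N))‖ = 1 := mem_sphere_zero_iff_norm.mp ω.2
    have step : (∫⁻ r in Ioi R, ENNReal.ofReal (r ^ (N - 1)) *
        ENNReal.ofReal (⟪r • (ω : EuclideanSpace ℝ (Fin N)),
            gradient u (r • (ω : EuclideanSpace ℝ (Fin N)))⟫ ^ 2 *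
          ‖r • (ω : EuclideanSpace ℝ (Fin N))‖ ^ a) ∂volume)
        = ∫⁻ r in Ioi R, ENNReal.ofReal (deriv (G ω) r ^ 2 * r ^ (p + 1)) ∂volume := by
      refine setLIntegral_congr_fun measurableSet_Ioi ?_
      intro r hr; beta_reduce
      have hr0 : 0 < r := lt_of_le_of_lt hR hr
      have hrnorm : ‖r • (ω : EuclideanSpace ℝ (Fin N))‖ = r := by
        rw [norm_smul, hω1, mul_one, Real.norm_eq_abs, abs_of_pos hr0]
      have hinner : ⟪r • (ω : EuclideanSpace ℝ (Fin N)),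
          gradient u (r • (ω : EuclideanSpace ℝ (Fin N)))⟫ = r * deriv (G ω) r := by
        rw [real_inner_smul_left, hGd ω r, real_inner_comm]
      rw [hrnorm, hinner, ← ENNReal.ofReal_mul (by positivity)]
      congr 1
      rw [hnpow r hr0]
      have hsq : (r : ℝ) ^ (2 : ℕ) = r ^ (2 : ℝ) := by
        rw [← Real.rpow_natCast r 2]; norm_num
      have hexp : r ^ ((N : ℝ) - 1) * (r ^ (2 : ℝ) * r ^ a) = r ^ (p + 1) := by
        rw [← Real.rpow_add hr0, ← Real.rpow_add hr0]
        congr 1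
        rw [hpdef]; ring
      calc r ^ ((N : ℝ) - 1) * ((r * deriv (G ω) r) ^ 2 * r ^ a)
          = deriv (G ω) r ^ 2 * (r ^ ((N : ℝ) - 1) * (r ^ (2 : ℕ) * r ^ a)) := by ring
        _ = deriv (G ω) r ^ 2 * (r ^ ((N : ℝ) - 1) * (r ^ (2 : ℝ) * r ^ a)) := by rw [hsq]
        _ = deriv (G ω) r ^ 2 * r ^ (p + 1) := by rw [hexp]
    rw [step, ← ofReal_integral_eq_lintegral_ofReal (IB ω) ?_]
    filter_upwards [ae_restrict_mem measurableSet_Ioi] with r hr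
    have hr0 : 0 < r := lt_of_le_of_lt hR hr
    positivity
  -- uniform bound for finiteness
  have hgradCS : HasCompactSupport (gradient u) := by
    have h1 : HasCompactSupport (fderiv ℝ u) := hsupp.fderiv (𝕜 := ℝ)
    have h2 := h1.comp_left
      (g := fun L : (EuclideanSpace ℝ (Fin N)) →L[ℝ] ℝ =>
        (InnerProductSpace.toDual ℝ (EuclideanSpace ℝ (Fin N))).symm L) (map_zero _)
    exact h2
  obtain ⟨K, hK⟩ := hgradc.bounded_above_of_compact_support hgradCS
  set ψ : ℝ → ℝ := (Ioc (0:ℝ) M).indicator (fun r => K ^ 2 * r ^ (p + 1)) with hψ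
  have hψint : IntegrableOn ψ (Ioi R) := by
    have h1 : IntegrableOn (fun r : ℝ => r ^ (p + 1)) (Ioc 0 M) := by
      have := (intervalIntegral.intervalIntegrable_rpow'
        (a := 0) (b := M) (by linarith : (-1:ℝ) < p + 1)).1
      simpa [uIoc_of_le hMnn] using this
    have h2 : IntegrableOn (fun r : ℝ => K ^ 2 * r ^ (p + 1)) (Ioc 0 M) := h1.const_mul _
    have h3 : Integrable ψ volume := (integrable_indicator_iff measurableSet_Ioc).mpr h2
    exact h3.integrableOn
  have hψnn : ∀ r, 0 ≤ ψ r := by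
    intro r
    apply indicator_nonneg
    intro t ht
    have ht0 : 0 < t := ht.1
    positivity
  have hBbound : ∀ ω : sphere (0 : EuclideanSpace ℝ (Fin N)) 1,
      (∫ r in Ioi R, deriv (G ω) r ^ 2 * r ^ (p + 1)) ≤ ∫ r in Ioi R, ψ r := by
    intro ω
    have hω1 : ‖(ω : EuclideanSpace ℝ (Fin N))‖ = 1 := mem_sphere_zero_iff_norm.mp ω.2
    refine integral_mono_ae (IB ω) hψint ?_
    filter_upwards [ae_restrict_mem measurableSet_Ioi] with r hr
    have hr0 : 0 < r := lt_of_le_of_lt hR hr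
    have hrnorm : ‖r • (ω : EuclideanSpace ℝ (Fin N))‖ = r := by
      rw [norm_smul, hω1, mul_one, Real.norm_eq_abs, abs_of_pos hr0]
    by_cases hrM : r ≤ M
    · rw [hψ, indicator_of_mem (Set.mem_Ioc.mpr ⟨hr0, hrM⟩)]
      have habs : |deriv (G ω) r| ≤ K := by
        rw [hGd ω r]
        calc |⟪gradient u (r • (ω : EuclideanSpace ℝ (Fin N))),
              (ω : EuclideanSpace ℝ (Fin N))⟫|
            ≤ ‖gradient u (r • (ω : EuclideanSpace ℝ (Fin N)))‖ *
              ‖(ω : EuclideanSpace ℝ (Fin N))‖ := abs_real_inner_le_norm _ _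
          _ = ‖gradient u (r • (ω : EuclideanSpace ℝ (Fin N)))‖ := by rw [hω1, mul_one]
          _ ≤ K := hK _
      have hsq : deriv (G ω) r ^ 2 ≤ K ^ 2 := by
        rw [← sq_abs]
        exact pow_le_pow_left₀ (abs_nonneg _) habs 2
      exact mul_le_mul_of_nonneg_right hsq (Real.rpow_nonneg hr0.le _)
    · have hzero : deriv (G ω) r = 0 := by
        rw [hGd ω r, hgradsupp _ (by rw [hrnorm]; exact not_le.mp hrM), inner_zero_left]
      rw [hzero]
      simpa using hψnn r
  -- finiteness of the right-hand side
  have hfin : (∫⁻ x in S, ENNReal.ofReal (⟪x, gradient u x⟫ ^ 2 * ‖x‖ ^ a)) ≠ ⊤ := by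
    rw [polar_restrict _ hf2m]
    have hle : (∫⁻ ω : sphere (0 : EuclideanSpace ℝ (Fin N)) 1, ∫⁻ r in Ioi R,
        ENNReal.ofReal (r ^ (N - 1)) * ENNReal.ofReal
          (⟪r • (ω : EuclideanSpace ℝ (Fin N)),
            gradient u (r • (ω : EuclideanSpace ℝ (Fin N)))⟫ ^ 2 *
          ‖r • (ω : EuclideanSpace ℝ (Fin N))‖ ^ a) ∂volume ∂volume.toSphere)
        ≤ ∫⁻ _ω : sphere (0 : EuclideanSpace ℝ (Fin N)) 1,
            ENNReal.ofReal (∫ r in Ioi R, ψ r) ∂volume.toSphere :=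
      lintegral_mono fun ω => le_trans (le_of_eq (e₂ ω))
        (ENNReal.ofReal_le_ofReal (hBbound ω))
    refine ne_top_of_le_ne_top ?_ hle
    rw [lintegral_const]
    exact ENNReal.mul_ne_top ENNReal.ofReal_ne_top (measure_ne_top _ _)
  -- main lintegral inequality
  have keyL : (∫⁻ x in S, ENNReal.ofReal (u x ^ 2 * ‖x‖ ^ a))
      ≤ ENNReal.ofReal (4 / p ^ 2) *
        ∫⁻ x in S, ENNReal.ofReal (⟪x, gradient u x⟫ ^ 2 * ‖x‖ ^ a) := by
    rw [polar_restrict _ hf1m, polar_restrict _ hf2m,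
      ← lintegral_const_mul' _ _ ENNReal.ofReal_ne_top]
    refine lintegral_mono fun ω => ?_
    refine le_trans (le_of_eq (e₁ ω)) (le_trans (ENNReal.ofReal_le_ofReal
      (hardy1D hp hR (hGC ω) (hGS ω))) (le_of_eq ?_))
    rw [ENNReal.ofReal_mul (by positivity), ← e₂ ω]
  -- convert to Bochner integrals
  have hnn1 : 0 ≤ᵐ[volume.restrict S] fun x : EuclideanSpace ℝ (Fin N) => u x ^ 2 * ‖x‖ ^ a :=
    Filter.Eventually.of_forall fun x => by positivity
  have hnn2 : 0 ≤ᵐ[volume.restrict S]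
      fun x : EuclideanSpace ℝ (Fin N) => ⟪x, gradient u x⟫ ^ 2 * ‖x‖ ^ a :=
    Filter.Eventually.of_forall fun x => by positivity
  rw [integral_eq_lintegral_of_nonneg_ae hnn1
      (((hucont.pow 2).measurable).mul hrpow_meas).aestronglyMeasurable.restrict,
    integral_eq_lintegral_of_nonneg_ae hnn2
      (((hinnerc.pow 2).measurable).mul hrpow_meas).aestronglyMeasurable.restrict]
  have h := ENNReal.toReal_mono (ENNReal.mul_ne_top ENNReal.ofReal_ne_top hfin) keyL
  rwa [ENNReal.toReal_mul, ENNReal.toReal_ofReal (by positivity)] at h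
end

section
/- Let 0 ≤ s < 2 and R > 0, and let ω₅ be the surface area of the unit sphere S⁵ ⊂ ℝ⁶. Then as ε → 0⁺, ∫_{|y|≤R, y∈ℝ⁶} |y|² / (ε + |y|^{2−s})^{8/(2−s)} dy = (ω₅/(2−s)) |log ε| + O(1). -/
open MeasureTheory Real Set

/-- The surface area of the unit sphere `S⁵ ⊂ ℝ⁶`, namely `π³`. -/
noncomputable def omega5 : ℝ := Real.pi ^ 3

private lemma mvt_rpow {α ε u : ℝ} (hα : 1 ≤ α) (hε : 0 < ε) (hu : 0 < u) :
    (ε + u) ^ α - u ^ α ≤ α * ε * (ε + u) ^ (α - 1) := by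
  have hα0 : 0 ≤ α - 1 := by linarith
  have hlt : u < u + ε := by linarith
  have hcont : ContinuousOn (fun x : ℝ => x ^ α) (Icc u (u + ε)) := fun x hx =>
    (Real.continuousAt_rpow_const x α (Or.inl (lt_of_lt_of_le hu hx.1).ne')).continuousWithinAt
  have hderiv : ∀ x ∈ Ioo u (u + ε), HasDerivAt (fun x : ℝ => x ^ α) (α * x ^ (α - 1)) x :=
    fun x hx => Real.hasDerivAt_rpow_const (Or.inl (hu.trans hx.1).ne')
  obtain ⟨c, hc, hc'⟩ := exists_hasDerivAt_eq_slope (fun x : ℝ => x ^ α)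
    (fun x => α * x ^ (α - 1)) hlt hcont hderiv
  have hc0 : 0 < c := hu.trans hc.1
  have hle : c ^ (α - 1) ≤ (ε + u) ^ (α - 1) := by
    rw [add_comm]
    exact Real.rpow_le_rpow hc0.le hc.2.le hα0
  have key : (u + ε) ^ α - u ^ α = α * c ^ (α - 1) * ε := by
    have h2 : u + ε - u = ε := by ring
    rw [h2] at hc'
    field_simp at hc'
    linarith [hc']
  calc (ε + u) ^ α - u ^ α = α * c ^ (α - 1) * ε := by rw [add_comm ε u]; exact key
    _ ≤ α * (ε + u) ^ (α - 1) * ε := by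
        have hα' : (0:ℝ) ≤ α := by linarith
        gcongr
    _ = α * ε * (ε + u) ^ (α - 1) := by ring

private lemma integrable_bound {s ε R : ℝ} (hs2 : s < 2) (hε : 0 < ε) (hR : 0 < R)
    {g : ℝ → ℝ} (hm : AEStronglyMeasurable g (volume.restrict (Set.uIoc (0:ℝ) R)))
    (hb : ∀ x ∈ Ioc (0:ℝ) R, |g x| ≤ ε⁻¹ * x ^ (1 - s)) :
    IntervalIntegrable g volume 0 R := by
  have hi : IntervalIntegrable (fun x : ℝ => ε⁻¹ * x ^ (1 - s)) volume 0 R :=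
    (intervalIntegral.intervalIntegrable_rpow' (by linarith)).const_mul _
  refine hi.mono_fun hm ?_
  rw [uIoc_of_le hR.le]
  refine (ae_restrict_iff' measurableSet_Ioc).2 (Filter.Eventually.of_forall fun x hx => ?_)
  have h1 : 0 ≤ x ^ (1 - s) := Real.rpow_nonneg hx.1.le _
  simp only [Real.norm_eq_abs]
  rw [abs_of_nonneg (by positivity : (0:ℝ) ≤ ε⁻¹ * x ^ (1 - s))]
  exact hb x hx

private lemma hasDerivAt_base {s ε : ℝ} (x : ℝ) (hx : 0 < x) :
    HasDerivAt (fun r : ℝ => ε + r ^ (2 - s)) ((2 - s) * x ^ (1 - s)) x := by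
  have h := (Real.hasDerivAt_rpow_const (x := x) (p := 2 - s) (Or.inl hx.ne')).const_add ε
  have he : 2 - s - 1 = 1 - s := by ring
  rwa [he] at h

private lemma intg_h {s ε R : ℝ} (hs2 : s < 2) (hε : 0 < ε) (hR : 0 < R) :
    IntervalIntegrable (fun r : ℝ => r ^ (1 - s) * (ε + r ^ (2 - s))⁻¹) volume 0 R := by
  refine integrable_bound hs2 hε hR (Measurable.aestronglyMeasurable (by fun_prop)) ?_
  intro x hx
  have h0 : (0:ℝ) < x ^ (1 - s) := Real.rpow_pos_of_pos hx.1 _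
  have hd : (0:ℝ) < ε + x ^ (2 - s) :=
    lt_of_lt_of_le hε (le_add_of_nonneg_right (Real.rpow_nonneg hx.1.le _))
  have h1 : (ε + x ^ (2 - s))⁻¹ ≤ ε⁻¹ := by
    apply inv_anti₀ hε
    exact le_add_of_nonneg_right (Real.rpow_nonneg hx.1.le _)
  rw [abs_of_nonneg (by positivity)]
  calc x ^ (1 - s) * (ε + x ^ (2 - s))⁻¹ ≤ x ^ (1 - s) * ε⁻¹ := by gcongr
    _ = ε⁻¹ * x ^ (1 - s) := by ring

private lemma intg_q {s ε R : ℝ} (hs2 : s < 2) (hε : 0 < ε) (hR : 0 < R) :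
    IntervalIntegrable (fun r : ℝ => ε * r ^ (1 - s) / (ε + r ^ (2 - s)) ^ 2) volume 0 R := by
  refine integrable_bound hs2 hε hR (Measurable.aestronglyMeasurable (by fun_prop)) ?_
  intro x hx
  have h0 : (0:ℝ) < x ^ (1 - s) := Real.rpow_pos_of_pos hx.1 _
  have hd : (0:ℝ) < ε + x ^ (2 - s) :=
    lt_of_lt_of_le hε (le_add_of_nonneg_right (Real.rpow_nonneg hx.1.le _))
  rw [abs_of_nonneg (by positivity)]
  calc ε * x ^ (1 - s) / (ε + x ^ (2 - s)) ^ 2 ≤ ε * x ^ (1 - s) / ε ^ 2 := by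
        gcongr
        exact le_add_of_nonneg_right (Real.rpow_nonneg hx.1.le _)
    _ = ε⁻¹ * x ^ (1 - s) := by
        rw [sq]
        field_simp

private lemma ftc_log {s ε R : ℝ} (hs2 : s < 2) (hε : 0 < ε) (hR : 0 < R) :
    ∫ r in (0:ℝ)..R, r ^ (1 - s) * (ε + r ^ (2 - s))⁻¹
      = (2 - s)⁻¹ * (Real.log (ε + R ^ (2 - s)) - Real.log ε) := by
  have h2s : (0:ℝ) < 2 - s := by linarith
  have hpos : ∀ x : ℝ, 0 ≤ x → 0 < ε + x ^ (2 - s) := fun x hx =>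
    lt_of_lt_of_le hε (le_add_of_nonneg_right (Real.rpow_nonneg hx _))
  have hcont : ContinuousOn (fun r : ℝ => (2 - s)⁻¹ * Real.log (ε + r ^ (2 - s))) (Icc 0 R) := by
    intro x hx
    have h1 : ContinuousAt (fun r : ℝ => ε + r ^ (2 - s)) x :=
      continuousAt_const.add (Real.continuousAt_rpow_const x _ (Or.inr h2s.le))
    exact (continuousAt_const.mul (h1.log (hpos x hx.1).ne')).continuousWithinAt
  have hderiv : ∀ x ∈ Ioo (0:ℝ) R, HasDerivWithinAt
      (fun r : ℝ => (2 - s)⁻¹ * Real.log (ε + r ^ (2 - s)))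
      (x ^ (1 - s) * (ε + x ^ (2 - s))⁻¹) (Ioi x) x := by
    intro x hx
    have h1 := ((hasDerivAt_base (s := s) (ε := ε) x hx.1).log
      (hpos x hx.1.le).ne').const_mul ((2 - s)⁻¹)
    have h2 : (2 - s)⁻¹ * ((2 - s) * x ^ (1 - s) / (ε + x ^ (2 - s)))
        = x ^ (1 - s) * (ε + x ^ (2 - s))⁻¹ := by
      field_simp
    rw [h2] at h1
    exact h1.hasDerivWithinAt
  rw [intervalIntegral.integral_eq_sub_of_hasDeriv_right_of_le hR.le hcont hderiv
    (intg_h hs2 hε hR)]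
  rw [Real.zero_rpow h2s.ne', add_zero]
  ring

private lemma ftc_inv {s ε R : ℝ} (hs2 : s < 2) (hε : 0 < ε) (hR : 0 < R) :
    ∫ r in (0:ℝ)..R, ε * r ^ (1 - s) / (ε + r ^ (2 - s)) ^ 2
      = (2 - s)⁻¹ * ε * (ε⁻¹ - (ε + R ^ (2 - s))⁻¹) := by
  have h2s : (0:ℝ) < 2 - s := by linarith
  have hpos : ∀ x : ℝ, 0 ≤ x → 0 < ε + x ^ (2 - s) := fun x hx =>
    lt_of_lt_of_le hε (le_add_of_nonneg_right (Real.rpow_nonneg hx _))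
  have hcont : ContinuousOn
      (fun r : ℝ => -((2 - s)⁻¹ * ε) * (ε + r ^ (2 - s))⁻¹) (Icc 0 R) := by
    intro x hx
    have h1 : ContinuousAt (fun r : ℝ => ε + r ^ (2 - s)) x :=
      continuousAt_const.add (Real.continuousAt_rpow_const x _ (Or.inr h2s.le))
    exact (continuousAt_const.mul (h1.inv₀ (hpos x hx.1).ne')).continuousWithinAt
  have hderiv : ∀ x ∈ Ioo (0:ℝ) R, HasDerivWithinAt
      (fun r : ℝ => -((2 - s)⁻¹ * ε) * (ε + r ^ (2 - s))⁻¹)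
      (ε * x ^ (1 - s) / (ε + x ^ (2 - s)) ^ 2) (Ioi x) x := by
    intro x hx
    have h1 := ((hasDerivAt_base (s := s) (ε := ε) x hx.1).inv
      (hpos x hx.1.le).ne').const_mul (-((2 - s)⁻¹ * ε))
    have h2 : -((2 - s)⁻¹ * ε) * (-((2 - s) * x ^ (1 - s)) / (ε + x ^ (2 - s)) ^ 2)
        = ε * x ^ (1 - s) / (ε + x ^ (2 - s)) ^ 2 := by
      have hd' : (ε + x ^ (2 - s)) ≠ 0 := (hpos x hx.1.le).ne'
      have hs' : (2 - s) ≠ 0 := h2s.ne'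
      field_simp
    rw [h2] at h1
    exact h1.hasDerivWithinAt
  rw [intervalIntegral.integral_eq_sub_of_hasDeriv_right_of_le hR.le hcont hderiv
    (intg_q hs2 hε hR)]
  rw [Real.zero_rpow h2s.ne', add_zero]
  ring

private lemma radial (F : ℝ → ℝ) (R : ℝ) (hR : 0 < R) :
    (∫ y in {y : EuclideanSpace ℝ (Fin 6) | ‖y‖ ≤ R}, F ‖y‖)
      = Real.pi ^ 3 * ∫ r in (0:ℝ)..R, r ^ 5 * F r := by
  have hset : {y : EuclideanSpace ℝ (Fin 6) | ‖y‖ ≤ R} = Metric.closedBall 0 R := by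
    ext y
    simp [Metric.mem_closedBall, dist_zero_right]
  rw [hset, ← integral_indicator measurableSet_closedBall]
  have hfun : ∀ y : EuclideanSpace ℝ (Fin 6),
      (Metric.closedBall (0 : EuclideanSpace ℝ (Fin 6)) R).indicator (fun y => F ‖y‖) y
        = ((Iic R).indicator F) ‖y‖ := by
    intro y
    by_cases h : ‖y‖ ≤ R <;>
      simp [Set.indicator_apply, h, Metric.mem_closedBall, dist_zero_right]
  simp_rw [hfun]
  rw [integral_fun_norm_addHaar (volume : Measure (EuclideanSpace ℝ (Fin 6)))
    ((Iic R).indicator F)]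
  have hvol : (volume (Metric.ball (0 : EuclideanSpace ℝ (Fin 6)) 1)).toReal
      = Real.pi ^ 3 / 6 := by
    rw [EuclideanSpace.volume_ball]
    have hcard : Fintype.card (Fin 6) = 6 := Fintype.card_fin 6
    rw [hcard]
    have h1 : Real.sqrt π ^ 6 = π ^ 3 := by
      rw [show (6:ℕ) = 2 * 3 from rfl, pow_mul, Real.sq_sqrt Real.pi_nonneg]
    have h2 : Real.Gamma (((6:ℕ):ℝ) / 2 + 1) = 6 := by
      have e : (((6:ℕ):ℝ) / 2 + 1) = ((3:ℕ):ℝ) + 1 := by norm_num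
      rw [e, Real.Gamma_nat_eq_factorial]
      norm_num [Nat.factorial]
    rw [h1, h2]
    simp [ENNReal.toReal_ofReal (by positivity : (0:ℝ) ≤ π ^ 3 / 6)]
  have hdim : Module.finrank ℝ (EuclideanSpace ℝ (Fin 6)) = 6 := by
    simp [finrank_euclideanSpace]
  rw [hdim, measureReal_def, hvol]
  have hind : ∀ y : ℝ, y ^ (6 - 1) • (Iic R).indicator F y
      = (Iic R).indicator (fun r => r ^ 5 * F r) y := by
    intro y
    by_cases h : y ∈ Iic R <;> simp [Set.indicator_apply, h]
  simp_rw [hind]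
  rw [setIntegral_indicator measurableSet_Iic, Ioi_inter_Iic,
    ← intervalIntegral.integral_of_le hR.le]
  rw [nsmul_eq_mul, smul_eq_mul]
  push_cast
  ring

private lemma pointwise_bounds {s ε : ℝ} (hs0 : 0 ≤ s) (hs2 : s < 2) (hε : 0 < ε)
    {x : ℝ} (hx0 : 0 < x) :
    x ^ 5 * (x ^ 2 / (ε + x ^ (2 - s)) ^ (8 / (2 - s)))
        ≤ x ^ (1 - s) * (ε + x ^ (2 - s))⁻¹ ∧
    x ^ (1 - s) * (ε + x ^ (2 - s))⁻¹
        - x ^ 5 * (x ^ 2 / (ε + x ^ (2 - s)) ^ (8 / (2 - s)))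
      ≤ (8 / (2 - s) - 1) * (ε * x ^ (1 - s) / (ε + x ^ (2 - s)) ^ 2) := by
  have h2s : (0:ℝ) < 2 - s := by linarith
  set b : ℝ := 8 / (2 - s) with hbdef
  have hb4 : (4:ℝ) ≤ b := by
    rw [hbdef, le_div_iff₀ h2s]; linarith
  have hb1 : (1:ℝ) ≤ b - 1 := by linarith
  set u : ℝ := x ^ (2 - s) with hudef
  have hu0 : 0 < u := Real.rpow_pos_of_pos hx0 _
  have hv0 : 0 < ε + u := by positivity
  have hw0 : 0 < x ^ (1 - s) := Real.rpow_pos_of_pos hx0 _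
  have hvb : (0:ℝ) < (ε + u) ^ b := Real.rpow_pos_of_pos hv0 _
  -- rewrite f₁ in rpow form
  have e1 : x ^ 5 * (x ^ 2 / (ε + u) ^ b) = x ^ (1 - s) * u ^ (b - 1) / (ε + u) ^ b := by
    have h7 : (x:ℝ) ^ (5:ℕ) * x ^ (2:ℕ) = x ^ ((7:ℝ)) := by
      rw [← Real.rpow_natCast x 5, ← Real.rpow_natCast x 2, ← Real.rpow_add hx0]
      norm_num
    have h7' : x ^ (1 - s) * u ^ (b - 1) = x ^ ((7:ℝ)) := by
      rw [hudef, ← Real.rpow_mul hx0.le, ← Real.rpow_add hx0]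
      congr 1
      rw [hbdef]
      field_simp
      ring
    rw [mul_div_assoc'] at *
    rw [h7, h7']
  -- rewrite h₁ in the same denominator
  have e2 : x ^ (1 - s) * (ε + u)⁻¹ = x ^ (1 - s) * (ε + u) ^ (b - 1) / (ε + u) ^ b := by
    have hbb : b - 1 - b = -1 := by ring
    rw [mul_div_assoc, ← Real.rpow_sub hv0, hbb, Real.rpow_neg_one]
  have hub : u ^ (b - 1) ≤ (ε + u) ^ (b - 1) :=
    Real.rpow_le_rpow hu0.le (by linarith) (by linarith)
  constructor
  · rw [e1, e2]
    gcongr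
  · have key := mvt_rpow hb1 hε hu0
    have hb2 : b - 1 - 1 = b - 2 := by ring
    rw [hb2] at key
    have e3 : (ε + u) ^ (b - 2) = (ε + u) ^ b / (ε + u) ^ (2:ℕ) := by
      rw [Real.rpow_sub hv0]
      congr 1
      rw [← Real.rpow_natCast (ε + u) 2]
      norm_num
    calc x ^ (1 - s) * (ε + u)⁻¹ - x ^ 5 * (x ^ 2 / (ε + u) ^ b)
        = x ^ (1 - s) * ((ε + u) ^ (b - 1) - u ^ (b - 1)) / (ε + u) ^ b := by
          rw [e1, e2]; ring
      _ ≤ x ^ (1 - s) * ((b - 1) * ε * (ε + u) ^ (b - 2)) / (ε + u) ^ b := by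
          gcongr
      _ = (b - 1) * (ε * x ^ (1 - s) / (ε + u) ^ 2) := by
          rw [e3]
          field_simp

/-- As `ε → 0⁺`,
`∫_{|y|≤R} |y|²/(ε+|y|^{2−s})^{8/(2−s)} dy = (ω₅/(2−s))|log ε| + O(1)`. -/
theorem log_asymptotics_dim6
    (s : ℝ) (hs0 : 0 ≤ s) (hs2 : s < 2) (R : ℝ) (hR : 0 < R) :
    ∃ C : ℝ, ∃ ε₀ : ℝ, 0 < ε₀ ∧ ∀ ε : ℝ, 0 < ε → ε < ε₀ →
      abs ((∫ y in {y : EuclideanSpace ℝ (Fin 6) | ‖y‖ ≤ R},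
            ‖y‖ ^ 2 / (ε + ‖y‖ ^ (2 - s)) ^ (8 / (2 - s)))
          - omega5 / (2 - s) * |Real.log ε|) ≤ C := by
  have h2s : (0:ℝ) < 2 - s := by linarith
  have hb4 : (4:ℝ) ≤ 8 / (2 - s) := by
    rw [le_div_iff₀ h2s]; linarith
  have hA0 : (0:ℝ) < R ^ (2 - s) := Real.rpow_pos_of_pos hR _
  set M : ℝ := |Real.log (R ^ (2 - s))| + |Real.log (R ^ (2 - s) + 1)| with hMdef
  refine ⟨Real.pi ^ 3 * ((2 - s)⁻¹ * M + (8 / (2 - s) - 1) * (2 - s)⁻¹), 1, one_pos,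
    fun ε hε hε1 => ?_⟩
  have hpos : ∀ x : ℝ, 0 ≤ x → 0 < ε + x ^ (2 - s) := fun x hx =>
    lt_of_lt_of_le hε (le_add_of_nonneg_right (Real.rpow_nonneg hx _))
  -- radial reduction
  have hrad := radial (fun r => r ^ 2 / (ε + r ^ (2 - s)) ^ (8 / (2 - s))) R hR
  rw [hrad]
  -- interval integrability of f₁
  have icf : IntervalIntegrable
      (fun r : ℝ => r ^ 5 * (r ^ 2 / (ε + r ^ (2 - s)) ^ (8 / (2 - s)))) volume 0 R := by
    apply ContinuousOn.intervalIntegrable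
    intro x hx
    rw [uIcc_of_le hR.le] at hx
    have h1 : ContinuousAt (fun r : ℝ => ε + r ^ (2 - s)) x :=
      continuousAt_const.add (Real.continuousAt_rpow_const x _ (Or.inr h2s.le))
    have h2 : ContinuousAt (fun r : ℝ => (ε + r ^ (2 - s)) ^ (8 / (2 - s))) x :=
      h1.rpow_const (Or.inl (hpos x hx.1).ne')
    have hne : (ε + x ^ (2 - s)) ^ (8 / (2 - s)) ≠ 0 :=
      (Real.rpow_pos_of_pos (hpos x hx.1) _).ne'
    exact (((continuous_pow 5).continuousAt).mul
      (((continuous_pow 2).continuousAt).div h2 hne)).continuousWithinAt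
  have ih := intg_h (ε := ε) hs2 hε hR
  have iq := intg_q (ε := ε) hs2 hε hR
  have EH := ftc_log (ε := ε) hs2 hε hR
  have EQ := ftc_inv (ε := ε) hs2 hε hR
  -- the difference D
  have hD1 : (∫ r in (0:ℝ)..R, (r ^ (1 - s) * (ε + r ^ (2 - s))⁻¹
        - r ^ 5 * (r ^ 2 / (ε + r ^ (2 - s)) ^ (8 / (2 - s)))))
      = (∫ r in (0:ℝ)..R, r ^ (1 - s) * (ε + r ^ (2 - s))⁻¹)
        - ∫ r in (0:ℝ)..R, r ^ 5 * (r ^ 2 / (ε + r ^ (2 - s)) ^ (8 / (2 - s))) :=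
    intervalIntegral.integral_sub ih icf
  have hDpos : 0 ≤ ∫ r in (0:ℝ)..R, (r ^ (1 - s) * (ε + r ^ (2 - s))⁻¹
      - r ^ 5 * (r ^ 2 / (ε + r ^ (2 - s)) ^ (8 / (2 - s)))) := by
    rw [intervalIntegral.integral_of_le hR.le]
    apply setIntegral_nonneg measurableSet_Ioc
    intro x hx
    have := (pointwise_bounds hs0 hs2 hε hx.1).1
    linarith
  have hq_le : (∫ r in (0:ℝ)..R, ε * r ^ (1 - s) / (ε + r ^ (2 - s)) ^ 2) ≤ (2 - s)⁻¹ := by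
    rw [EQ]
    have h1 : ε * (ε⁻¹ - (ε + R ^ (2 - s))⁻¹) ≤ 1 := by
      rw [mul_sub, mul_inv_cancel₀ hε.ne']
      have h2 : 0 ≤ ε * (ε + R ^ (2 - s))⁻¹ := by positivity
      linarith
    calc (2 - s)⁻¹ * ε * (ε⁻¹ - (ε + R ^ (2 - s))⁻¹)
        = (2 - s)⁻¹ * (ε * (ε⁻¹ - (ε + R ^ (2 - s))⁻¹)) := by ring
      _ ≤ (2 - s)⁻¹ * 1 := by
          apply mul_le_mul_of_nonneg_left h1 (by positivity)
      _ = (2 - s)⁻¹ := mul_one _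
  have hDle : (∫ r in (0:ℝ)..R, (r ^ (1 - s) * (ε + r ^ (2 - s))⁻¹
      - r ^ 5 * (r ^ 2 / (ε + r ^ (2 - s)) ^ (8 / (2 - s)))))
      ≤ (8 / (2 - s) - 1) * (2 - s)⁻¹ := by
    have step1 : (∫ r in (0:ℝ)..R, (r ^ (1 - s) * (ε + r ^ (2 - s))⁻¹
        - r ^ 5 * (r ^ 2 / (ε + r ^ (2 - s)) ^ (8 / (2 - s)))))
        ≤ ∫ r in (0:ℝ)..R, (8 / (2 - s) - 1) * (ε * r ^ (1 - s) / (ε + r ^ (2 - s)) ^ 2) := by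
      rw [intervalIntegral.integral_of_le hR.le, intervalIntegral.integral_of_le hR.le]
      apply setIntegral_mono_on
      · exact (intervalIntegrable_iff_integrableOn_Ioc_of_le hR.le).1 (ih.sub icf)
      · exact (intervalIntegrable_iff_integrableOn_Ioc_of_le hR.le).1 (iq.const_mul _)
      · exact measurableSet_Ioc
      · intro x hx
        exact (pointwise_bounds hs0 hs2 hε hx.1).2
    rw [intervalIntegral.integral_const_mul] at step1
    calc _ ≤ (8 / (2 - s) - 1) * ∫ r in (0:ℝ)..R, ε * r ^ (1 - s) / (ε + r ^ (2 - s)) ^ 2 :=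
          step1
      _ ≤ (8 / (2 - s) - 1) * (2 - s)⁻¹ :=
          mul_le_mul_of_nonneg_left hq_le (by linarith)
  -- log bounds
  have hlogε : Real.log ε < 0 := Real.log_neg hε hε1
  have hMb : |Real.log (ε + R ^ (2 - s))| ≤ M := by
    have h1 : Real.log (ε + R ^ (2 - s)) ≤ Real.log (R ^ (2 - s) + 1) :=
      Real.log_le_log (by positivity) (by linarith)
    have h2 : Real.log (R ^ (2 - s)) ≤ Real.log (ε + R ^ (2 - s)) :=
      Real.log_le_log hA0 (by linarith)
    rw [abs_le]
    constructor
    · have := neg_abs_le (Real.log (R ^ (2 - s)))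
      have h3 := abs_nonneg (Real.log (R ^ (2 - s) + 1))
      rw [hMdef]; linarith
    · have := le_abs_self (Real.log (R ^ (2 - s) + 1))
      have h3 := abs_nonneg (Real.log (R ^ (2 - s)))
      rw [hMdef]; linarith
  -- final assembly
  rw [abs_of_neg hlogε]
  have hLval : (∫ r in (0:ℝ)..R, r ^ 5 * (r ^ 2 / (ε + r ^ (2 - s)) ^ (8 / (2 - s))))
      = (2 - s)⁻¹ * (Real.log (ε + R ^ (2 - s)) - Real.log ε)
        - ∫ r in (0:ℝ)..R, (r ^ (1 - s) * (ε + r ^ (2 - s))⁻¹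
          - r ^ 5 * (r ^ 2 / (ε + r ^ (2 - s)) ^ (8 / (2 - s)))) := by
    rw [hD1, EH]; ring
  rw [hLval]
  set D : ℝ := ∫ r in (0:ℝ)..R, (r ^ (1 - s) * (ε + r ^ (2 - s))⁻¹
      - r ^ 5 * (r ^ 2 / (ε + r ^ (2 - s)) ^ (8 / (2 - s)))) with hDdef
  have hcomb : Real.pi ^ 3 * ((2 - s)⁻¹ * (Real.log (ε + R ^ (2 - s)) - Real.log ε) - D)
      - omega5 / (2 - s) * (-Real.log ε)
      = Real.pi ^ 3 * ((2 - s)⁻¹ * Real.log (ε + R ^ (2 - s)) - D) := by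
    rw [omega5]
    field_simp
    ring
  rw [hcomb]
  rw [abs_mul, abs_of_pos (by positivity : (0:ℝ) < Real.pi ^ 3)]
  have hX : |(2 - s)⁻¹ * Real.log (ε + R ^ (2 - s)) - D|
      ≤ (2 - s)⁻¹ * M + (8 / (2 - s) - 1) * (2 - s)⁻¹ := by
    have h1 : |(2 - s)⁻¹ * Real.log (ε + R ^ (2 - s))| ≤ (2 - s)⁻¹ * M := by
      rw [abs_mul, abs_of_pos (by positivity : (0:ℝ) < (2 - s)⁻¹)]
      exact mul_le_mul_of_nonneg_left hMb (by positivity)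
    have h2 : |D| ≤ (8 / (2 - s) - 1) * (2 - s)⁻¹ := by
      rw [abs_of_nonneg hDpos]
      exact hDle
    calc |(2 - s)⁻¹ * Real.log (ε + R ^ (2 - s)) - D|
        ≤ |(2 - s)⁻¹ * Real.log (ε + R ^ (2 - s))| + |D| := abs_sub _ _
      _ ≤ (2 - s)⁻¹ * M + (8 / (2 - s) - 1) * (2 - s)⁻¹ := add_le_add h1 h2
  exact mul_le_mul_of_nonneg_left hX (by positivity)
end
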